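/- Let p be a prime, n a positive integer, and A a subset of G = ℤ_p × ℤ_{p^n}. Suppose there exist a ∈ ℤ_p, an integer s ≥ 1, and integers 0 ≤ i₁ < i₂ < ⋯ < i_s ≤ n−1 such that (a, p^{i₁}) ∈ Z_A and (0, p^{i_r}) ∈ Z_A for all r = 2, …, s. Then p^s divides |A|. -/

import Mathlib

open Complex Pointwise

/-- The inner product on `ℤ_p × ℤ_{p^n}`: `⟨u,v⟩ = p^(n-1)·u₁·v₁ + u₂·v₂` in `ℤ_{p^n}`. -/
def inn (p n : ℕ) (u v : ZMod p × ZMod (p ^ n)) : ZMod (p ^ n) :=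
  (p : ZMod (p ^ n)) ^ (n - 1) * (u.1.val : ZMod (p ^ n)) * (v.1.val : ZMod (p ^ n)) +
    u.2 * v.2

/-- The character `χ_g(h) = e^(2πi⟨g,h⟩/p^n)`. -/
noncomputable def chi (p n : ℕ) (g h : ZMod p × ZMod (p ^ n)) : ℂ :=
  Complex.exp (2 * Real.pi * Complex.I * ((inn p n g h).val : ℂ) / ((p : ℂ) ^ n))

/-- `χ_g(A) = Σ_{a ∈ A} χ_g(a)`. -/
noncomputable def chiSum (p n : ℕ) (g : ZMod p × ZMod (p ^ n))
    (A : Finset (ZMod p × ZMod (p ^ n))) : ℂ :=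
  ∑ a ∈ A, chi p n g a

/-- The zero set `Z_A = {g : χ_g(A) = 0}`. -/
def zeroSet (p n : ℕ) (A : Finset (ZMod p × ZMod (p ^ n))) :
    Set (ZMod p × ZMod (p ^ n)) :=
  {g | chiSum p n g A = 0}

/-- `(A,B)` is a spectral pair: `|A| = |B|` and `χ_{b-b'}(A) = 0` for distinct `b,b' ∈ B`. -/
def SpectralPair (p n : ℕ) (A B : Finset (ZMod p × ZMod (p ^ n))) : Prop :=
  A.card = B.card ∧ ∀ b ∈ B, ∀ b' ∈ B, b ≠ b' → chiSum p n (b - b') A = 0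

/-- `A` is a spectral set: some `B` makes `(A,B)` a spectral pair. -/
def SpectralSet (p n : ℕ) (A : Finset (ZMod p × ZMod (p ^ n))) : Prop :=
  ∃ B : Finset (ZMod p × ZMod (p ^ n)), SpectralPair p n A B

/-- `(A,T)` is a tiling pair: every `g` has a unique representation `g = a + t`, `a ∈ A`, `t ∈ T`. -/
def TilingPair (p n : ℕ) (A T : Finset (ZMod p × ZMod (p ^ n))) : Prop :=
  ∀ g : ZMod p × ZMod (p ^ n),
    ∃! x : (ZMod p × ZMod (p ^ n)) × (ZMod p × ZMod (p ^ n)),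
      x.1 ∈ A ∧ x.2 ∈ T ∧ g = x.1 + x.2

/-- `A` tiles `ℤ_p × ℤ_{p^n}` by translation. -/
def Tiles (p n : ℕ) (A : Finset (ZMod p × ZMod (p ^ n))) : Prop :=
  ∃ T : Finset (ZMod p × ZMod (p ^ n)), TilingPair p n A T

namespace PowDvdAux

open Polynomial Finset

noncomputable def zet (p n : ℕ) : ℂ := Complex.exp (2 * Real.pi * Complex.I / (p:ℂ)^n)

noncomputable def ee (p n : ℕ) (x : ZMod (p^n)) : ℂ := zet p n ^ x.val

variable {p n : ℕ}

lemma Npos (hp : p.Prime) : 0 < p ^ n := pow_pos hp.pos n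

lemma hzet (hp : p.Prime) : IsPrimitiveRoot (zet p n) (p^n) := by
  have := Complex.isPrimitiveRoot_exp (p^n) (Npos (n := n) hp).ne'
  simpa [zet, Nat.cast_pow] using this

lemma zet_pow_mod (hp : p.Prime) (a : ℕ) : zet p n ^ (a % p^n) = zet p n ^ a := by
  conv_rhs => rw [← Nat.div_add_mod a (p^n)]
  rw [pow_add, pow_mul, (hzet hp).pow_eq_one, one_pow, one_mul]

lemma chi_eq (g h : ZMod p × ZMod (p^n)) : chi p n g h = ee p n (inn p n g h) := by
  rw [chi, ee, zet, ← Complex.exp_nat_mul]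
  ring_nf

lemma ee_add (hp : p.Prime) (x y : ZMod (p^n)) : ee p n (x + y) = ee p n x * ee p n y := by
  have : NeZero (p^n) := ⟨(Npos (n := n) hp).ne'⟩
  rw [ee, ZMod.val_add, zet_pow_mod hp, pow_add]; rfl

lemma ee_t (hp : p.Prime) (t x : ZMod (p^n)) : ee p n (t * x) = (ee p n x) ^ t.val := by
  have : NeZero (p^n) := ⟨(Npos (n := n) hp).ne'⟩
  rw [ee, ZMod.val_mul, zet_pow_mod hp, ee, ← pow_mul, mul_comm t.val x.val]

lemma ee_ne_one (hp : p.Prime) {x : ZMod (p^n)} (hx : x ≠ 0) : ee p n x ≠ 1 := by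
  have : NeZero (p^n) := ⟨(Npos (n := n) hp).ne'⟩
  exact (hzet hp).pow_ne_one_of_pos_of_lt (ZMod.val_pos.mpr hx).ne' (ZMod.val_lt x)

lemma sum_ee (hp : p.Prime) [NeZero (p^n)] (x : ZMod (p^n)) :
    ∑ t : ZMod (p^n), ee p n (t * x) = if x = 0 then ((p^n : ℕ) : ℂ) else 0 := by
  split_ifs with h
  · subst h
    simp only [mul_zero]
    rw [Finset.sum_const, Finset.card_univ, ZMod.card]
    simp [ee, ZMod.val_zero]
  · have h1 : ∑ t : ZMod (p^n), ee p n (t * x) = ∑ j ∈ Finset.range (p^n), (ee p n x)^j := by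
      simp only [ee_t hp]
      exact Finset.sum_nbij' (fun t => t.val) (fun k => (k : ZMod (p^n)))
        (fun t _ => Finset.mem_range.mpr (ZMod.val_lt t))
        (fun k _ => Finset.mem_univ _)
        (fun t _ => ZMod.natCast_rightInverse t)
        (fun k hk => (ZMod.val_natCast (p^n) k).trans (Nat.mod_eq_of_lt (Finset.mem_range.mp hk)))
        (fun t _ => rfl)
    rw [h1, geom_sum_eq (ee_ne_one hp h)]
    have : (ee p n x) ^ (p^n) = 1 := by
      rw [ee, ← pow_mul, mul_comm, pow_mul, (hzet hp).pow_eq_one, one_pow]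
    rw [this, sub_self, zero_div]


lemma galois (hp : p.Prime) (A : Finset (ZMod p × ZMod (p^n)))
    (f : ZMod p × ZMod (p^n) → ZMod (p^n))
    (h : ∑ u ∈ A, ee p n (f u) = 0) (t : ZMod (p^n)) (ht : IsUnit t) :
    ∑ u ∈ A, ee p n (t * f u) = 0 := by
  haveI : NeZero (p^n) := ⟨(Npos (n := n) hp).ne'⟩
  have hN : 0 < p ^ n := Npos hp
  set τ := t.val with hτdef
  have hτ : τ.Coprime (p^n) := by
    have ht' : IsUnit ((τ : ZMod (p^n))) := by
      rwa [hτdef, ZMod.natCast_val, ZMod.cast_id]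
    exact (ZMod.isUnit_iff_coprime τ (p^n)).mp ht'
  set P : Polynomial ℚ := ∑ u ∈ A, Polynomial.X ^ (f u).val with hP
  have h1 : Polynomial.aeval (zet p n) P = 0 := by
    rw [hP, map_sum]
    simpa [ee] using h
  have hdvd := minpoly.dvd ℚ (zet p n) h1
  have hprim : IsPrimitiveRoot (zet p n ^ τ) (p^n) := (hzet hp).pow_of_coprime τ hτ
  have hmin : minpoly ℚ (zet p n ^ τ) = minpoly ℚ (zet p n) := by
    rw [← Polynomial.cyclotomic_eq_minpoly_rat hprim hN,
      ← Polynomial.cyclotomic_eq_minpoly_rat (hzet hp) hN]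
  have h2 : Polynomial.aeval (zet p n ^ τ) P = 0 := by
    obtain ⟨Q, hQ⟩ := hdvd
    rw [hQ, map_mul, ← hmin, minpoly.aeval, zero_mul]
  calc ∑ u ∈ A, ee p n (t * f u) = ∑ u ∈ A, (zet p n ^ τ) ^ (f u).val := by
        refine Finset.sum_congr rfl fun u _ => ?_
        rw [ee_t hp, ee, ← pow_mul, ← pow_mul, mul_comm]
    _ = Polynomial.aeval (zet p n ^ τ) P := by rw [hP, map_sum]; simp
    _ = 0 := h2


lemma sum_ite_card (A : Finset (ZMod p × ZMod (p^n))) (P : ZMod p × ZMod (p^n) → Prop)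
    [DecidablePred P] (c : ℂ) :
    ∑ u ∈ A, (if P u then c else 0) = c * ((A.filter P).card : ℂ) := by
  rw [Finset.sum_ite, Finset.sum_const, Finset.sum_const_zero, add_zero, nsmul_eq_mul, mul_comm]

lemma fiber_eq (hp : p.Prime) (hn : 1 ≤ n) (A : Finset (ZMod p × ZMod (p^n)))
    (g : ZMod p × ZMod (p^n)) (hg : g ∈ zeroSet p n A) (x : ZMod (p^n)) :
    (A.filter fun u => inn p n g u = x).card
      = (A.filter fun u => inn p n g u = x + (p : ZMod (p^n))^(n-1)).card := by
  classical
  haveI : NeZero (p^n) := ⟨(Npos (n := n) hp).ne'⟩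
  set q : ZMod (p^n) := (p : ZMod (p^n))^(n-1) with hqdef
  have hpn0 : ((p : ZMod (p^n)))^n = 0 := by
    have : ((p : ZMod (p^n)))^n = ((p^n : ℕ) : ZMod (p^n)) := by push_cast; ring
    rw [this, ZMod.natCast_self]
  have hpq : (p : ZMod (p^n)) * q = 0 := by
    rw [hqdef, ← pow_succ', Nat.sub_add_cancel hn, hpn0]
  have hS : ∀ t : ZMod (p^n), IsUnit t → ∑ u ∈ A, ee p n (t * inn p n g u) = 0 := by
    intro t ht
    refine galois hp A _ ?_ t ht
    have hg' : ∑ u ∈ A, chi p n g u = 0 := hg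
    simpa [chi_eq] using hg'
  have htq : ∀ t : ZMod (p^n), ¬ IsUnit t → t * q = 0 := by
    intro t ht
    have hdvd : p ∣ t.val := by
      by_contra hd
      exact ht (by
        have : t.val.Coprime (p^n) :=
          Nat.Coprime.pow_right n ((Nat.Prime.coprime_iff_not_dvd hp).mpr hd).symm
        have := (ZMod.isUnit_iff_coprime t.val (p^n)).mpr this
        rwa [ZMod.natCast_val, ZMod.cast_id] at this)
    obtain ⟨w, hw⟩ := hdvd
    have ht' : t = (p : ZMod (p^n)) * (w : ZMod (p^n)) := by
      have : t = ((t.val : ℕ) : ZMod (p^n)) := by rw [ZMod.natCast_val, ZMod.cast_id]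
      rw [this, hw]; push_cast; ring
    rw [ht', mul_comm (p : ZMod (p^n)) (w : ZMod (p^n)), mul_assoc, hpq, mul_zero]
  set D := ∑ t : ZMod (p^n), ∑ u ∈ A,
      (ee p n (t * (inn p n g u - x)) - ee p n (t * (inn p n g u - (x + q)))) with hD
  have hD0 : D = 0 := by
    refine Finset.sum_eq_zero fun t _ => ?_
    by_cases ht : IsUnit t
    · have hterm : ∀ u ∈ A,
          ee p n (t * (inn p n g u - x)) - ee p n (t * (inn p n g u - (x + q)))
            = ee p n (t * inn p n g u) * (ee p n (t * (-x)) - ee p n (t * (-(x + q)))) := by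
        intro u _
        have e1 : t * (inn p n g u - x) = t * inn p n g u + t * (-x) := by ring
        have e2 : t * (inn p n g u - (x + q)) = t * inn p n g u + t * (-(x + q)) := by ring
        rw [e1, e2, ee_add hp, ee_add hp, mul_sub]
      rw [Finset.sum_congr rfl hterm, ← Finset.sum_mul, hS t ht, zero_mul]
    · refine Finset.sum_eq_zero fun u _ => ?_
      have harg : t * (inn p n g u - (x + q)) = t * (inn p n g u - x) := by
        have := htq t ht
        linear_combination -this
      rw [harg, sub_self]
  have hD1 : D = ((p^n : ℕ) : ℂ) * ((A.filter fun u => inn p n g u = x).card : ℂ)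
      - ((p^n : ℕ) : ℂ) * ((A.filter fun u => inn p n g u = x + q).card : ℂ) := by
    rw [hD, Finset.sum_comm]
    have hu : ∀ u ∈ A,
        ∑ t : ZMod (p^n), (ee p n (t * (inn p n g u - x)) - ee p n (t * (inn p n g u - (x + q))))
          = (if inn p n g u = x then ((p^n : ℕ) : ℂ) else 0)
            - (if inn p n g u = x + q then ((p^n : ℕ) : ℂ) else 0) := by
      intro u _
      rw [Finset.sum_sub_distrib, sum_ee hp, sum_ee hp]
      simp only [sub_eq_zero]
    rw [Finset.sum_congr rfl hu, Finset.sum_sub_distrib, sum_ite_card, sum_ite_card]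
  have hNne : ((p^n : ℕ) : ℂ) ≠ 0 := by
    exact_mod_cast (Npos (n := n) hp).ne'
  have hcast : ((A.filter fun u => inn p n g u = x).card : ℂ)
      = ((A.filter fun u => inn p n g u = x + q).card : ℂ) := by
    have h0 := hD1.symm.trans hD0
    have := sub_eq_zero.mp h0
    exact mul_left_cancel₀ hNne this
  exact_mod_cast hcast


def Fib (p n : ℕ) (A : Finset (ZMod p × ZMod (p^n))) (e : ℕ) (c : ZMod (p^n)) : ℕ :=
  (A.filter fun u => (p : ZMod (p^n))^e * (u.2 - c) = 0).card

lemma pn_zero (hp : p.Prime) : ((p : ZMod (p^n)))^n = 0 := by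
  have h : ((p : ZMod (p^n)))^n = ((p^n : ℕ) : ZMod (p^n)) := by push_cast; ring
  rw [h, ZMod.natCast_self]

lemma pq_zero (hp : p.Prime) (hn : 1 ≤ n) :
    (p : ZMod (p^n)) * (p : ZMod (p^n))^(n-1) = 0 := by
  rw [← pow_succ', Nat.sub_add_cancel hn, pn_zero hp]

lemma pow_mul_eq_zero_iff (hp : p.Prime) {e : ℕ} (he : e ≤ n) (x : ZMod (p^n)) :
    (p : ZMod (p^n))^e * x = 0 ↔ p^(n-e) ∣ x.val := by
  haveI : NeZero (p^n) := ⟨(Npos (n := n) hp).ne'⟩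
  have hx : ((x.val : ℕ) : ZMod (p^n)) = x := by rw [ZMod.natCast_val, ZMod.cast_id]
  have h2 : (p : ZMod (p^n))^e * x = ((p^e * x.val : ℕ) : ZMod (p^n)) := by
    conv_lhs => rw [← hx]
    push_cast; ring
  rw [h2, ZMod.natCast_eq_zero_iff]
  have hfac : p^n = p^e * p^(n-e) := by rw [← pow_add]; congr 1; omega
  constructor
  · intro hd
    have h3 : p^e * p^(n-e) ∣ p^e * x.val := by rw [← hfac]; exact hd
    exact (Nat.mul_dvd_mul_iff_left (pow_pos hp.pos e)).mp h3
  · intro hd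
    have h3 : p^e * p^(n-e) ∣ p^e * x.val :=
      (Nat.mul_dvd_mul_iff_left (pow_pos hp.pos e)).mpr hd
    rwa [← hfac] at h3

lemma exists_q (hp : p.Prime) (hn : 1 ≤ n) {z : ZMod (p^n)}
    (hz : (p : ZMod (p^n)) * z = 0) :
    ∃ j < p, z = (j : ZMod (p^n)) * (p : ZMod (p^n))^(n-1) := by
  haveI : NeZero (p^n) := ⟨(Npos (n := n) hp).ne'⟩
  have h1 : p^(n-1) ∣ z.val := by
    have := (pow_mul_eq_zero_iff hp hn z).mp (by rwa [pow_one])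
    exact this
  obtain ⟨w, hw⟩ := h1
  refine ⟨w % p, Nat.mod_lt _ hp.pos, ?_⟩
  have hz' : z = ((p^(n-1) * w : ℕ) : ZMod (p^n)) := by
    rw [← hw, ZMod.natCast_val, ZMod.cast_id]
  have hw2 : w = p * (w / p) + w % p := (Nat.div_add_mod w p).symm
  have hcast := congrArg (fun m : ℕ => (m : ZMod (p^n))) hw2
  push_cast at hcast
  have hpq := pq_zero hp hn
  rw [hz']
  push_cast
  linear_combination (p : ZMod (p^n))^(n-1) * hcast
    + ((w / p : ℕ) : ZMod (p^n)) * hpq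

lemma val_jq (hp : p.Prime) (hn : 1 ≤ n) {j : ℕ} (hj : j < p) :
    ((j : ZMod (p^n)) * (p : ZMod (p^n))^(n-1)).val = j * p^(n-1) := by
  haveI : NeZero (p^n) := ⟨(Npos (n := n) hp).ne'⟩
  have h1 : (j : ZMod (p^n)) * (p : ZMod (p^n))^(n-1)
      = ((j * p^(n-1) : ℕ) : ZMod (p^n)) := by push_cast; ring
  rw [h1, ZMod.val_natCast, Nat.mod_eq_of_lt]
  calc j * p^(n-1) < p * p^(n-1) := (Nat.mul_lt_mul_right (pow_pos hp.pos _)).mpr hj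
    _ = p^n := by rw [← pow_succ']; congr 1; omega

lemma card_filter_pmul (hp : p.Prime) (hn : 1 ≤ n) (A : Finset (ZMod p × ZMod (p^n)))
    (F : ZMod p × ZMod (p^n) → ZMod (p^n)) :
    (A.filter fun u => (p : ZMod (p^n)) * F u = 0).card
      = ∑ j ∈ Finset.range p,
          (A.filter fun u => F u = (j : ZMod (p^n)) * (p : ZMod (p^n))^(n-1)).card := by
  classical
  haveI : NeZero (p^n) := ⟨(Npos (n := n) hp).ne'⟩
  have hdiv : ∀ {j : ℕ}, j < p → ∀ {u}, F u = (j : ZMod (p^n)) * (p : ZMod (p^n))^(n-1) →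
      (F u).val / p^(n-1) = j := by
    intro j hj u hu
    rw [hu, val_jq hp hn hj, Nat.mul_div_cancel _ (pow_pos hp.pos _)]
  have hP : ∀ {u}, (p : ZMod (p^n)) * F u = 0 →
      ∃ j < p, F u = (j : ZMod (p^n)) * (p : ZMod (p^n))^(n-1) := fun hu => exists_q hp hn hu
  have hback : ∀ {j : ℕ} {u}, F u = (j : ZMod (p^n)) * (p : ZMod (p^n))^(n-1) →
      (p : ZMod (p^n)) * F u = 0 := by
    intro j u hu
    rw [hu, show (p : ZMod (p^n)) * ((j : ZMod (p^n)) * (p : ZMod (p^n))^(n-1))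
        = (j : ZMod (p^n)) * ((p : ZMod (p^n)) * (p : ZMod (p^n))^(n-1)) by ring,
      pq_zero hp hn, mul_zero]
  have h1 := Finset.card_eq_sum_card_fiberwise
    (f := fun u => (F u).val / p^(n-1)) (t := Finset.range p)
    (s := A.filter fun u => (p : ZMod (p^n)) * F u = 0) ?_
  · rw [h1]
    refine Finset.sum_congr rfl fun j hj => ?_
    have hjp : j < p := Finset.mem_range.mp hj
    congr 1
    rw [Finset.filter_filter]
    refine Finset.filter_congr fun u hu => ?_
    constructor
    · rintro ⟨hPu, hfu⟩
      obtain ⟨j₀, hj₀, hFu⟩ := hP hPu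
      have hjj : j₀ = j := (hdiv hj₀ hFu).symm.trans hfu
      rw [← hjj]; exact hFu
    · intro hFu
      exact ⟨hback hFu, hdiv hjp hFu⟩
  · intro u hu
    obtain ⟨j₀, hj₀, hFu⟩ := hP (Finset.mem_filter.mp hu).2
    show (F u).val / p^(n-1) ∈ Finset.range p
    rw [hdiv hj₀ hFu]
    exact Finset.mem_range.mpr hj₀


lemma fib_succ (hp : p.Prime) (hn : 1 ≤ n) (A : Finset (ZMod p × ZMod (p^n))) (b : ZMod p)
    {i : ℕ} (hi : i ≤ n - 1)
    (hz : (b, (p : ZMod (p^n))^i) ∈ zeroSet p n A) (c : ZMod (p^n)) :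
    Fib p n A (i+1) c
      = p * (A.filter fun u =>
          inn p n (b, (p : ZMod (p^n))^i) u = (p : ZMod (p^n))^i * c).card := by
  classical
  set g : ZMod p × ZMod (p^n) := (b, (p : ZMod (p^n))^i) with hg
  set F : ZMod p × ZMod (p^n) → ZMod (p^n) :=
    fun u => inn p n g u - (p : ZMod (p^n))^i * c with hF
  have hFp : ∀ u : ZMod p × ZMod (p^n),
      (p : ZMod (p^n)) * F u = (p : ZMod (p^n))^(i+1) * (u.2 - c) := by
    intro u
    have hpq := pq_zero hp hn
    simp only [hF, hg, inn]
    linear_combination ((b.val : ZMod (p^n)) * (u.1.val : ZMod (p^n))) * hpq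
  have h1 : Fib p n A (i+1) c = (A.filter fun u => (p : ZMod (p^n)) * F u = 0).card := by
    rw [Fib]
    congr 1
    apply Finset.filter_congr
    intro u _
    rw [hFp u]
  rw [h1, card_filter_pmul hp hn A F]
  have hshift : ∀ (j : ℕ),
      (A.filter fun u => inn p n g u
          = (p : ZMod (p^n))^i * c + (j : ZMod (p^n)) * (p : ZMod (p^n))^(n-1)).card
        = (A.filter fun u => inn p n g u = (p : ZMod (p^n))^i * c).card := by
    intro j
    induction j with
    | zero => simp
    | succ j ih =>
      have hstep := fiber_eq hp hn A g hz
        ((p : ZMod (p^n))^i * c + (j : ZMod (p^n)) * (p : ZMod (p^n))^(n-1))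
      have harg : (p : ZMod (p^n))^i * c + ((j+1 : ℕ) : ZMod (p^n)) * (p : ZMod (p^n))^(n-1)
          = ((p : ZMod (p^n))^i * c + (j : ZMod (p^n)) * (p : ZMod (p^n))^(n-1))
            + (p : ZMod (p^n))^(n-1) := by push_cast; ring
      rw [harg, ← hstep, ih]
  have hsum : ∀ j ∈ Finset.range p,
      (A.filter fun u => F u = (j : ZMod (p^n)) * (p : ZMod (p^n))^(n-1)).card
        = (A.filter fun u => inn p n g u = (p : ZMod (p^n))^i * c).card := by
    intro j _
    have hiff : (A.filter fun u => F u = (j : ZMod (p^n)) * (p : ZMod (p^n))^(n-1))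
        = (A.filter fun u => inn p n g u
            = (p : ZMod (p^n))^i * c + (j : ZMod (p^n)) * (p : ZMod (p^n))^(n-1)) := by
      apply Finset.filter_congr
      intro u _
      exact sub_eq_iff_eq_add'
    rw [hiff, hshift j]
  rw [Finset.sum_congr rfl hsum, Finset.sum_const, Finset.card_range, smul_eq_mul]

lemma M0_eq_fib (hp : p.Prime) (A : Finset (ZMod p × ZMod (p^n))) (i : ℕ) (c : ZMod (p^n)) :
    (A.filter fun u =>
        inn p n ((0 : ZMod p), (p : ZMod (p^n))^i) u = (p : ZMod (p^n))^i * c).card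
      = Fib p n A i c := by
  rw [Fib]
  congr 1
  apply Finset.filter_congr
  intro u _
  have h0 : inn p n ((0 : ZMod p), (p : ZMod (p^n))^i) u = (p : ZMod (p^n))^i * u.2 := by
    simp [inn, ZMod.val_zero]
  rw [h0]
  constructor
  · intro h; rw [mul_sub, h, sub_self]
  · intro h
    have h2 : (p : ZMod (p^n))^i * u.2 - (p : ZMod (p^n))^i * c = 0 := by
      rw [← mul_sub]; exact h
    exact sub_eq_zero.mp h2

lemma fib_step (hp : p.Prime) (hn : 1 ≤ n) {e : ℕ} (he : e < n)
    (A : Finset (ZMod p × ZMod (p^n))) (c : ZMod (p^n)) :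
    Fib p n A (e+1) c = ∑ j ∈ Finset.range p,
      Fib p n A e (c + (j : ZMod (p^n)) * (p : ZMod (p^n))^(n-e-1)) := by
  classical
  set F : ZMod p × ZMod (p^n) → ZMod (p^n) :=
    fun u => (p : ZMod (p^n))^e * (u.2 - c) with hF
  have h1 : Fib p n A (e+1) c = (A.filter fun u => (p : ZMod (p^n)) * F u = 0).card := by
    rw [Fib]
    congr 1
    apply Finset.filter_congr
    intro u _
    have h2 : (p : ZMod (p^n))^(e+1) * (u.2 - c) = (p : ZMod (p^n)) * F u := by
      rw [hF]; ring
    rw [h2]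
  rw [h1, card_filter_pmul hp hn A F]
  refine Finset.sum_congr rfl fun j hj => ?_
  rw [Fib]
  congr 1
  apply Finset.filter_congr
  intro u _
  have hpow : (p : ZMod (p^n))^e * (p : ZMod (p^n))^(n-e-1) = (p : ZMod (p^n))^(n-1) := by
    rw [← pow_add]; congr 1; omega
  have hkey : (p : ZMod (p^n))^e * (u.2 - (c + (j : ZMod (p^n)) * (p : ZMod (p^n))^(n-e-1)))
      = F u - (j : ZMod (p^n)) * (p : ZMod (p^n))^(n-1) := by
    rw [hF]
    linear_combination (-(j : ZMod (p^n))) * hpow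
  rw [hkey, sub_eq_zero]

lemma fib_dvd_of_le (hp : p.Prime) (hn : 1 ≤ n) (A : Finset (ZMod p × ZMod (p^n)))
    {t e' : ℕ} (h : ∀ c, p^t ∣ Fib p n A e' c) :
    ∀ e, e' ≤ e → e ≤ n → ∀ c, p^t ∣ Fib p n A e c := by
  intro e
  induction e with
  | zero =>
    intro h1 _ c
    have h0 : e' = 0 := Nat.le_zero.mp h1
    exact h0 ▸ h c
  | succ e ih =>
    intro h1 h2 c
    by_cases he : e' = e + 1
    · exact he ▸ h c
    · have h1' : e' ≤ e := by omega
      rw [fib_step hp hn (by omega) A c]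
      exact Finset.dvd_sum fun j _ => ih h1' (by omega) _

lemma fib_top (hp : p.Prime) (A : Finset (ZMod p × ZMod (p^n))) (c : ZMod (p^n)) :
    Fib p n A n c = A.card := by
  rw [Fib]
  congr 1
  rw [Finset.filter_true_of_mem]
  intro u _
  rw [pn_zero hp, zero_mul]

end PowDvdAux

/-- Divisibility property: if `(a, p^(i₁)), (0, p^(i₂)), …, (0, p^(i_s)) ∈ Z_A`
with `0 ≤ i₁ < ⋯ < i_s ≤ n - 1`, then `p^s ∣ |A|`. -/
theorem pow_dvd_card_of_zeroSet (p n : ℕ) (hp : p.Prime) (hn : 1 ≤ n)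
    (A : Finset (ZMod p × ZMod (p ^ n))) (a : ZMod p) (s : ℕ) (hs : 1 ≤ s)
    (i : Fin s → ℕ) (hmono : StrictMono i) (hle : ∀ r : Fin s, i r ≤ n - 1)
    (h1 : (a, (p : ZMod (p ^ n)) ^ i ⟨0, hs⟩) ∈ zeroSet p n A)
    (h2 : ∀ r : Fin s, r ≠ ⟨0, hs⟩ →
      ((0 : ZMod p), (p : ZMod (p ^ n)) ^ i r) ∈ zeroSet p n A) :
    p ^ s ∣ A.card := by
  classical
  open PowDvdAux in
  have key : ∀ r : ℕ, ∀ hr : r < s, ∀ c : ZMod (p^n),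
      p^(r+1) ∣ PowDvdAux.Fib p n A (i ⟨r, hr⟩ + 1) c := by
    intro r
    induction r with
    | zero =>
      intro hr c
      rw [PowDvdAux.fib_succ hp hn A a (hle ⟨0, hr⟩) h1 c, pow_one]
      exact dvd_mul_right p _
    | succ r ih =>
      intro hr c
      have hr' : r < s := Nat.lt_of_succ_lt hr
      have hmlt : i ⟨r, hr'⟩ < i ⟨r+1, hr⟩ :=
        hmono (Fin.mk_lt_mk.mpr (Nat.lt_succ_self r))
      have hne : (⟨r+1, hr⟩ : Fin s) ≠ ⟨0, hs⟩ := by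
        intro hcon
        exact Nat.succ_ne_zero r (by simpa [Fin.ext_iff] using hcon)
      have hz := h2 ⟨r+1, hr⟩ hne
      rw [PowDvdAux.fib_succ hp hn A 0 (hle ⟨r+1, hr⟩) hz c,
        PowDvdAux.M0_eq_fib hp A (i ⟨r+1, hr⟩) c]
      have hdvd : p^(r+1) ∣ PowDvdAux.Fib p n A (i ⟨r+1, hr⟩) c :=
        PowDvdAux.fib_dvd_of_le hp hn A (ih hr') (i ⟨r+1, hr⟩) hmlt
          ((hle ⟨r+1, hr⟩).trans (Nat.sub_le n 1)) c
      rw [pow_succ']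
      exact mul_dvd_mul_left p hdvd
  have hs' : s - 1 < s := by omega
  have hkey' : ∀ c, p^s ∣ PowDvdAux.Fib p n A (i ⟨s-1, hs'⟩ + 1) c := by
    intro c
    have := key (s-1) hs' c
    rwa [Nat.sub_add_cancel hs] at this
  have hfinal := PowDvdAux.fib_dvd_of_le hp hn A hkey' n
    (by have := hle ⟨s-1, hs'⟩; omega) le_rfl 0
  rwa [PowDvdAux.fib_top hp A 0] at hfinal
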